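/- Let k and n be positive integers with k ≤ 32n. Let Δ^k := {p ∈ ℝ^k : p_i ≥ 0 for all i, ∑_{i=1}^k p_i = 1} be the probability simplex, and for p ∈ Δ^k let X_1,…,X_n be i.i.d. samples from the categorical distribution on {1,…,k} with probability vector p. Then inf_{p̂} sup_{p ∈ Δ^k} E[ ‖p − p̂(X_1,…,X_n)‖_1 ] ≥ (3·log 2 / 4096) · √((k−1)/n), where the infimum is over all (possibly randomized) estimators p̂ : {1,…,k}^n → Δ^k and ‖·‖_1 denotes the ℓ¹ norm on ℝ^k. -/

import Mathlib

open MeasureTheory ENNReal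

noncomputable section

/-- The set of couplings of two measures. -/
def couplings {Ω : Type*} [MeasurableSpace Ω] (P Q : Measure Ω) : Set (Measure (Ω × Ω)) :=
  {μ | μ.map Prod.fst = P ∧ μ.map Prod.snd = Q}

/-- `W_r^r(P,Q)`, the `r`-th power of the `r`-Wasserstein distance. -/
def wassersteinPow {Ω : Type*} [MeasurableSpace Ω] [PseudoEMetricSpace Ω] (r : ℝ)
    (P Q : Measure Ω) : ℝ≥0∞ :=
  ⨅ μ ∈ couplings P Q, ∫⁻ p : Ω × Ω, edist p.1 p.2 ^ r ∂μ

/-- The `r`-Wasserstein distance. -/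
def wasserstein {Ω : Type*} [MeasurableSpace Ω] [PseudoEMetricSpace Ω] (r : ℝ)
    (P Q : Measure Ω) : ℝ≥0∞ :=
  (wassersteinPow r P Q) ^ (1 / r)

/-- The empirical measure of `n` samples. -/
def empiricalMeasure {Ω : Type*} [MeasurableSpace Ω] (n : ℕ) (x : Fin n → Ω) : Measure Ω :=
  (n : ℝ≥0∞)⁻¹ • ∑ i : Fin n, Measure.dirac (x i)

/-- `𝒮` is a countable-or-not Borel partition of the set `B`. -/
def IsBorelPartitionOf {Ω : Type*} [MeasurableSpace Ω] (𝒮 : Set (Set Ω)) (B : Set Ω) : Prop :=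
  (∀ S ∈ 𝒮, MeasurableSet S) ∧ ⋃₀ 𝒮 = B ∧ 𝒮.PairwiseDisjoint id

/-- The resolution of a partition: the largest diameter of any of its elements. -/
def partRes {Ω : Type*} [PseudoEMetricSpace Ω] (𝒮 : Set (Set Ω)) : ℝ≥0∞ :=
  ⨆ S ∈ 𝒮, EMetric.diam S

/-- The `ε`-covering number of a Borel set `B`: the minimal cardinality of a countable
Borel partition of `B` all of whose elements have diameter at most `ε`. -/
def coveringNumber {Ω : Type*} [MeasurableSpace Ω] [PseudoEMetricSpace Ω]
    (B : Set Ω) (ε : ℝ) : ℝ≥0∞ :=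
  ⨅ (𝒮 : Set (Set Ω)) (_ : IsBorelPartitionOf 𝒮 B ∧ 𝒮.Countable ∧
      ∀ S ∈ 𝒮, EMetric.diam S ≤ ENNReal.ofReal ε), (𝒮.encard : ℝ≥0∞)

/-- The separation of a set: the smallest distance between distinct points. -/
def eSep {Ω : Type*} [PseudoEMetricSpace Ω] (S : Set Ω) : ℝ≥0∞ :=
  ⨅ (x ∈ S) (y ∈ S) (_ : x ≠ y), edist x y

/-- `|a - b|` for extended nonnegative reals. -/
def ennrDiff (a b : ℝ≥0∞) : ℝ≥0∞ := (a - b) + (b - a)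

/-- The `ℓ`-th metric moment of `P` about `x₀`. -/
def metricMoment {Ω : Type*} [MeasurableSpace Ω] [PseudoEMetricSpace Ω]
    (P : Measure Ω) (x₀ : Ω) (ℓ : ℝ) : ℝ≥0∞ :=
  (∫⁻ y, edist x₀ y ^ ℓ ∂P) ^ (1 / ℓ)

end

/-- The probability simplex in `ℝ^k`. -/
def probSimplex (k : ℕ) : Set (Fin k → ℝ) :=
  {p | (∀ i, 0 ≤ p i) ∧ ∑ i, p i = 1}

/-- The categorical distribution on `{1,…,k}` with probability vector `p`. -/
noncomputable def categorical {k : ℕ} (p : Fin k → ℝ) : MeasureTheory.Measure (Fin k) :=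
  ∑ i : Fin k, ENNReal.ofReal (p i) • MeasureTheory.Measure.dirac i

/-! ### Auxiliary lemmas -/

open Finset

section Aux

lemma mySum_range_two_mul {M : Type*} [AddCommMonoid M] (m : ℕ) (F : ℕ → M) :
    ∑ i ∈ Finset.range (2*m), F i = ∑ j ∈ Finset.range m, (F (2*j) + F (2*j+1)) := by
  induction m with
  | zero => simp
  | succ m ih =>
      have : 2 * (m+1) = (2*m + 1) + 1 := by ring
      rw [this, Finset.sum_range_succ, Finset.sum_range_succ, ih, Finset.sum_range_succ]
      rw [add_assoc]

lemma mySum_fin_pairs {k m : ℕ} (h2m : 2*m ≤ k) (G : ℕ → ℝ)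
    (hG : ∀ i, 2*m ≤ i → G i = 0) :
    ∑ i : Fin k, G i = ∑ j ∈ Finset.range m, (G (2*j) + G (2*j+1)) := by
  rw [Fin.sum_univ_eq_sum_range]
  rw [← Finset.sum_subset (Finset.range_subset_range.2 h2m)]
  · exact mySum_range_two_mul m G
  · intro x hx hx2
    exact hG x (by simpa using hx2)

noncomputable def qv (m : ℕ) (a δ : ℝ) (τ : Fin m → Bool) (i : ℕ) : ℝ :=
  if h : i < 2*m then
    a + (if i % 2 = 0 then 1 else -1) * (if τ ⟨i/2, by omega⟩ then δ else -δ)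
  else 0

lemma qv_even {m : ℕ} (a δ : ℝ) (τ : Fin m → Bool) (j : Fin m) :
    qv m a δ τ (2*j) = a + (if τ j then δ else -δ) := by
  have h : 2*(j:ℕ) < 2*m := by omega
  simp only [qv, dif_pos h, Nat.mul_mod_right, if_pos rfl]
  have : (⟨2*(j:ℕ)/2, by omega⟩ : Fin m) = j := by
    ext; simp [Nat.mul_div_cancel_left]
  rw [this]
  norm_num

lemma qv_odd {m : ℕ} (a δ : ℝ) (τ : Fin m → Bool) (j : Fin m) :
    qv m a δ τ (2*j+1) = a - (if τ j then δ else -δ) := by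
  have h : 2*(j:ℕ)+1 < 2*m := by omega
  have hmod : (2*(j:ℕ)+1) % 2 = 1 := by omega
  simp only [qv, dif_pos h, hmod]
  have : (⟨(2*(j:ℕ)+1)/2, by omega⟩ : Fin m) = j := by
    ext; simp; omega
  rw [this]
  rcases τ j <;> norm_num <;> ring

lemma qv_zero {m : ℕ} (a δ : ℝ) (τ : Fin m → Bool) (i : ℕ) (hi : 2*m ≤ i) :
    qv m a δ τ i = 0 := by simp [qv]; omega

lemma qv_nonneg {m : ℕ} {a δ : ℝ} (h0 : 0 ≤ δ) (h1 : δ ≤ a) (τ : Fin m → Bool) (i : ℕ) :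
    0 ≤ qv m a δ τ i := by
  unfold qv
  split
  · split <;> split <;> nlinarith
  · exact le_refl _

def bflip {m : ℕ} (j : Fin m) (τ : Fin m → Bool) : Fin m → Bool :=
  Function.update τ j (!τ j)

lemma bflip_apply_self {m : ℕ} (j : Fin m) (τ : Fin m → Bool) : bflip j τ j = !τ j :=
  Function.update_self _ _ _

lemma bflip_apply_ne {m : ℕ} (j j' : Fin m) (τ : Fin m → Bool) (h : j' ≠ j) :
    bflip j τ j' = τ j' := Function.update_of_ne h _ _

lemma bflip_bflip {m : ℕ} (j : Fin m) (τ : Fin m → Bool) : bflip j (bflip j τ) = τ := by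
  funext j'
  by_cases h : j' = j
  · subst h; rw [bflip_apply_self, bflip_apply_self, Bool.not_not]
  · rw [bflip_apply_ne _ _ _ h, bflip_apply_ne _ _ _ h]

lemma qv_sum {k m : ℕ} (h2m : 2*m ≤ k) (a δ : ℝ) (τ : Fin m → Bool) :
    ∑ i : Fin k, qv m a δ τ i = (m:ℝ) * (2*a) := by
  rw [mySum_fin_pairs h2m _ (fun i hi => qv_zero a δ τ i hi)]
  rw [Finset.sum_congr rfl (fun j' hj' => ?_), Finset.sum_const, Finset.card_range,
    nsmul_eq_mul]
  have hj : j' < m := Finset.mem_range.1 hj'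
  show qv m a δ τ (2*(⟨j', hj⟩ : Fin m)) + qv m a δ τ (2*(⟨j', hj⟩ : Fin m)+1) = 2*a
  rw [qv_even, qv_odd]; ring

lemma qv_affinity {k m : ℕ} (h2m : 2*m ≤ k) {a δ : ℝ} (h0 : 0 ≤ δ) (h1 : δ ≤ a)
    (τ : Fin m → Bool) (j : Fin m) :
    ∑ i : Fin k, Real.sqrt (qv m a δ τ i * qv m a δ (bflip j τ) i)
      = (m:ℝ) * (2*a) - 2*a + 2*Real.sqrt (a^2 - δ^2) := by
  rw [mySum_fin_pairs h2m (fun i => Real.sqrt (qv m a δ τ i * qv m a δ (bflip j τ) i))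
    (fun i hi => by simp only [qv_zero a δ τ i hi, zero_mul, Real.sqrt_zero])]
  have key : ∀ j' ∈ Finset.range m,
      Real.sqrt (qv m a δ τ (2*j') * qv m a δ (bflip j τ) (2*j'))
        + Real.sqrt (qv m a δ τ (2*j'+1) * qv m a δ (bflip j τ) (2*j'+1))
      = 2*a + (if j' = (j:ℕ) then 2*Real.sqrt (a^2 - δ^2) - 2*a else 0) := by
    intro j' hj'
    have hj : j' < m := Finset.mem_range.1 hj'
    set J : Fin m := ⟨j', hj⟩ with hJ
    have e1 : 2*j' = 2*(J:ℕ) := rfl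
    have e2 : 2*j'+1 = 2*(J:ℕ)+1 := rfl
    rw [e1, e2, qv_even, qv_odd, qv_even, qv_odd]
    by_cases hjj : J = j
    · have hij : j' = (j:ℕ) := by rw [← hjj]
      rw [if_pos hij, hjj, bflip_apply_self]
      set s : ℝ := if τ j = true then δ else -δ with hs
      have hns : (if (!τ j) = true then δ else -δ) = -s := by
        rcases hb : τ j <;> simp [hs, hb]
      have hss : s^2 = δ^2 := by
        rcases hb : τ j <;> simp [hs, hb]
      rw [hns]
      have e3 : (a + s) * (a + -s) = a^2 - δ^2 := by rw [← hss]; ring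
      have e4 : (a - s) * (a - -s) = a^2 - δ^2 := by rw [← hss]; ring
      rw [e3, e4]; ring
    · have hij : ¬ (j' = (j:ℕ)) := by
        intro h; exact hjj (Fin.ext h)
      rw [if_neg hij, bflip_apply_ne _ _ _ hjj]
      set s : ℝ := if τ J = true then δ else -δ with hs
      have hsb : -a ≤ s ∧ s ≤ a := by
        rcases hb : τ J <;> simp [hs, hb] <;> constructor <;> linarith
      rw [Real.sqrt_mul_self (by linarith [hsb.1, hsb.2]),
        Real.sqrt_mul_self (by linarith [hsb.1, hsb.2])]
      ring
  rw [Finset.sum_congr rfl key, Finset.sum_add_distrib, Finset.sum_const, Finset.card_range,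
    nsmul_eq_mul, Finset.sum_ite_eq' (Finset.range m) (j:ℕ),
    if_pos (Finset.mem_range.2 j.isLt)]
  ring

lemma mySqrt_prod {α : Type*} (s : Finset α) (f : α → ℝ) (h : ∀ i ∈ s, 0 ≤ f i) :
    Real.sqrt (∏ i ∈ s, f i) = ∏ i ∈ s, Real.sqrt (f i) := by
  induction s using Finset.cons_induction with
  | empty => simp
  | cons a s ha ih =>
      rw [Finset.prod_cons, Finset.prod_cons, Real.sqrt_mul (h a (Finset.mem_cons_self a s)),
        ih (fun i hi => h i (Finset.mem_cons_of_mem hi))]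

lemma myCauchy_min {α : Type*} (s : Finset α) (u v : α → ℝ)
    (hu : ∀ i ∈ s, 0 ≤ u i) (hv : ∀ i ∈ s, 0 ≤ v i)
    (h1 : ∑ i ∈ s, u i ≤ 1) (h2 : ∑ i ∈ s, v i ≤ 1) :
    (∑ i ∈ s, Real.sqrt (u i * v i))^2 ≤ 2 * ∑ i ∈ s, min (u i) (v i) := by
  have key : (∑ i ∈ s, Real.sqrt (u i * v i))^2
      ≤ (∑ i ∈ s, min (u i) (v i)) * ∑ i ∈ s, max (u i) (v i) := by
    apply Finset.sum_sq_le_sum_mul_sum_of_sq_eq_mul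
    · exact fun i hi => le_min (hu i hi) (hv i hi)
    · exact fun i hi => le_max_of_le_left (hu i hi)
    · intro i hi
      rw [Real.sq_sqrt (mul_nonneg (hu i hi) (hv i hi)), min_mul_max]
  refine key.trans ?_
  have hmax : ∑ i ∈ s, max (u i) (v i) ≤ 2 := by
    calc ∑ i ∈ s, max (u i) (v i) ≤ ∑ i ∈ s, (u i + v i) := by
          apply Finset.sum_le_sum
          intro i hi
          exact max_le (by linarith [hv i hi]) (by linarith [hu i hi])
      _ = (∑ i ∈ s, u i) + ∑ i ∈ s, v i := Finset.sum_add_distrib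
      _ ≤ 2 := by linarith
  have hminn : 0 ≤ ∑ i ∈ s, min (u i) (v i) :=
    Finset.sum_nonneg fun i hi => le_min (hu i hi) (hv i hi)
  calc (∑ i ∈ s, min (u i) (v i)) * ∑ i ∈ s, max (u i) (v i)
      ≤ (∑ i ∈ s, min (u i) (v i)) * 2 := by
        apply mul_le_mul_of_nonneg_left hmax hminn
    _ = 2 * ∑ i ∈ s, min (u i) (v i) := by ring

lemma myMin_bound {n k : ℕ} (hn : 1 ≤ n) (p q : Fin k → ℝ)
    (hp0 : ∀ y, 0 ≤ p y) (hq0 : ∀ y, 0 ≤ q y)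
    (hp1 : ∑ y, p y = 1) (hq1 : ∑ y, q y = 1)
    (hρ : 1 - 1/(16*(n:ℝ)) ≤ ∑ y, Real.sqrt (p y * q y)) :
    7/16 ≤ ∑ x : Fin n → Fin k, min (∏ i, p (x i)) (∏ i, q (x i)) := by
  have hnR : (1:ℝ) ≤ (n:ℝ) := by exact_mod_cast hn
  have hx0 : (0:ℝ) ≤ 1 - 1/(16*(n:ℝ)) := by
    have : 1/(16*(n:ℝ)) ≤ 1/16 := by
      apply div_le_div_of_nonneg_left <;> nlinarith
    linarith
  have hsq : ∀ x : Fin n → Fin k,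
      Real.sqrt ((∏ i, p (x i)) * ∏ i, q (x i)) = ∏ i, Real.sqrt (p (x i) * q (x i)) := by
    intro x
    rw [← Finset.prod_mul_distrib,
      mySqrt_prod _ _ (fun i _ => mul_nonneg (hp0 (x i)) (hq0 (x i)))]
  have hsum_sqrt : ∑ x : Fin n → Fin k, Real.sqrt ((∏ i, p (x i)) * ∏ i, q (x i))
      = (∑ y, Real.sqrt (p y * q y))^n := by
    rw [Fintype.sum_pow (fun y => Real.sqrt (p y * q y)) n]
    exact Finset.sum_congr rfl fun x _ => hsq x
  have hCS := myCauchy_min Finset.univ (fun x : Fin n → Fin k => ∏ i, p (x i))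
    (fun x => ∏ i, q (x i))
    (fun x _ => Finset.prod_nonneg fun i _ => hp0 (x i))
    (fun x _ => Finset.prod_nonneg fun i _ => hq0 (x i))
    (le_of_eq (by rw [← Fintype.sum_pow p n, hp1, one_pow]))
    (le_of_eq (by rw [← Fintype.sum_pow q n, hq1, one_pow]))
  rw [hsum_sqrt] at hCS
  have hBer : (7:ℝ)/8 ≤ (1 - 1/(16*(n:ℝ)))^(2*n) := by
    have h := one_add_mul_le_pow (a := -(1/(16*(n:ℝ)))) (by nlinarith) (2*n)
    have e : (1:ℝ) + (2*n : ℕ) * (-(1/(16*(n:ℝ)))) = 1 - (2*(n:ℝ))/(16*(n:ℝ)) := by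
      push_cast; ring
    rw [e] at h
    have : (2*(n:ℝ))/(16*(n:ℝ)) = 1/8 := by
      rw [div_eq_iff (by nlinarith)]; ring
    rw [this] at h
    calc (7:ℝ)/8 = 1 - 1/8 := by norm_num
      _ ≤ _ := h
  have hpow : (1 - 1/(16*(n:ℝ)))^(2*n) ≤ ((∑ y, Real.sqrt (p y * q y))^n)^2 := by
    rw [← pow_mul, mul_comm n 2]
    exact pow_le_pow_left₀ hx0 hρ (2*n)
  linarith

lemma real_main {k m n : ℕ} (h2m : 2*m ≤ k) (hn : 1 ≤ n) {a δ : ℝ}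
    (h0 : 0 ≤ δ) (h1 : δ ≤ a) (hsum : (m:ℝ) * (2*a) = 1)
    (hρ : 1 - 1/(16*(n:ℝ)) ≤ (m:ℝ) * (2*a) - 2*a + 2*Real.sqrt (a^2 - δ^2))
    (est : (Fin n → Fin k) → (Fin k → ℝ)) :
    (2:ℝ)^m * (7/32 * (δ * (m:ℝ))) ≤
      ∑ τ : Fin m → Bool, ∑ x : Fin n → Fin k,
        (∏ i, qv m a δ τ ((x i):ℕ)) * ∑ i : Fin k, |qv m a δ τ (i:ℕ) - est x i| := by
  classical
  -- notation
  set P : (Fin m → Bool) → Fin k → ℝ := fun τ i => qv m a δ τ (i:ℕ) with hP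
  set w : (Fin m → Bool) → (Fin n → Fin k) → ℝ := fun τ x => ∏ i, P τ (x i) with hw
  have hw0 : ∀ τ x, 0 ≤ w τ x := fun τ x =>
    Finset.prod_nonneg fun i _ => qv_nonneg h0 h1 τ _
  have h2jk : ∀ j : Fin m, 2*(j:ℕ) < k := fun j => by have := j.isLt; omega
  set e2 : Fin m → Fin k := fun j => ⟨2*(j:ℕ), h2jk j⟩ with he2
  set D : (Fin n → Fin k) → Fin m → Bool := fun x j => decide (a ≤ est x (e2 j)) with hD
  set E : (Fin m → Bool) → (Fin n → Fin k) → Fin m → ℝ :=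
    fun τ x j => if D x j = τ j then 0 else δ with hE
  -- Step A : pointwise lower bound on the ℓ¹ loss
  have hA : ∀ τ x, ∑ j : Fin m, E τ x j ≤ ∑ i : Fin k, |P τ i - est x i| := by
    intro τ x
    have step1 : ∀ j : Fin m, E τ x j ≤ |P τ (e2 j) - est x (e2 j)| := by
      intro j
      have hPj : P τ (e2 j) = a + (if τ j then δ else -δ) := by
        show qv m a δ τ ((e2 j : Fin k) : ℕ) = _
        have : ((e2 j : Fin k) : ℕ) = 2*(j:ℕ) := rfl
        rw [this, qv_even]
      rcases hd : D x j with _ | _ <;> rcases hτ : τ j with _ | _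
      · have hEe : E τ x j = 0 := by simp [hE, hd, hτ]
        rw [hEe]; exact abs_nonneg _
      · -- D = false (est < a), τ j = true : P = a + δ
        have hEe : E τ x j = δ := by simp [hE, hd, hτ]
        have hlt : ¬ (a ≤ est x (e2 j)) := by
          have := hd; simp only [hD, decide_eq_false_iff_not] at this; exact this
        push_neg at hlt
        have hPv : P τ (e2 j) = a + δ := by rw [hPj, hτ, if_pos rfl]
        rw [hEe, hPv, abs_of_nonneg (by linarith)]
        linarith
      · -- D = true (a ≤ est), τ j = false : P = a - δ
        have hEe : E τ x j = δ := by simp [hE, hd, hτ]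
        have hge : a ≤ est x (e2 j) := by
          have := hd; simpa only [hD, decide_eq_true_eq] using this
        have hPv : P τ (e2 j) = a - δ := by
          rw [hPj, hτ]; simp only [Bool.false_eq_true, if_false]; ring
        rw [hEe, hPv, abs_sub_comm, abs_of_nonneg (by linarith)]
        linarith
      · have hEe : E τ x j = 0 := by simp [hE, hd, hτ]
        rw [hEe]; exact abs_nonneg _
    have hinj : ∀ j ∈ (univ : Finset (Fin m)), ∀ j' ∈ univ, e2 j = e2 j' → j = j' := by
      intro j _ j' _ h
      have : 2*(j:ℕ) = 2*(j':ℕ) := congrArg Fin.val h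
      exact Fin.ext (by omega)
    calc ∑ j : Fin m, E τ x j ≤ ∑ j : Fin m, |P τ (e2 j) - est x (e2 j)| :=
          Finset.sum_le_sum fun j _ => step1 j
      _ = ∑ i ∈ Finset.image e2 univ, |P τ i - est x i| := by
          rw [Finset.sum_image hinj]
      _ ≤ ∑ i : Fin k, |P τ i - est x i| :=
          Finset.sum_le_sum_of_subset_of_nonneg (Finset.subset_univ _)
            (fun i _ _ => abs_nonneg _)
  -- Step D : pairing lower bound for fixed j, x
  have hD2 : ∀ (j : Fin m) (x : Fin n → Fin k),
      ∑ τ ∈ (univ.filter (fun τ : Fin m → Bool => τ j = false)),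
          δ * min (w τ x) (w (bflip j τ) x)
        ≤ ∑ τ : Fin m → Bool, w τ x * E τ x j := by
    intro j x
    rw [← Finset.sum_filter_add_sum_filter_not univ (fun τ : Fin m → Bool => τ j = false)
      (fun τ => w τ x * E τ x j)]
    have hbij : ∑ τ ∈ univ.filter (fun τ : Fin m → Bool => ¬ (τ j = false)),
        w τ x * E τ x j
        = ∑ τ ∈ univ.filter (fun τ : Fin m → Bool => τ j = false),
            w (bflip j τ) x * E (bflip j τ) x j := by
      apply Finset.sum_bij' (fun τ _ => bflip j τ) (fun τ _ => bflip j τ)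
      · intro τ hτ
        simp only [Finset.mem_filter, Finset.mem_univ, true_and] at hτ ⊢
        rw [bflip_apply_self]
        simp only [Bool.not_eq_false] at hτ
        simp [hτ]
      · intro τ hτ
        simp only [Finset.mem_filter, Finset.mem_univ, true_and] at hτ ⊢
        rw [bflip_apply_self, hτ]
        simp
      · intro τ _; exact bflip_bflip j τ
      · intro τ _; exact bflip_bflip j τ
      · intro τ _; rw [bflip_bflip]
    rw [hbij, ← Finset.sum_add_distrib]
    apply Finset.sum_le_sum
    intro τ hτ
    simp only [Finset.mem_filter, Finset.mem_univ, true_and] at hτ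
    have hfl : bflip j τ j = true := by rw [bflip_apply_self, hτ]; rfl
    rcases hd : D x j with _ | _
    · -- D = false : τ (=false) is correct, bflip errs
      have h1' : E τ x j = 0 := by simp [hE, hd, hτ]
      have h2' : E (bflip j τ) x j = δ := by simp [hE, hd, hfl]
      rw [h1', h2', mul_zero, zero_add]
      calc δ * min (w τ x) (w (bflip j τ) x) ≤ δ * w (bflip j τ) x :=
            mul_le_mul_of_nonneg_left (min_le_right _ _) h0
        _ = w (bflip j τ) x * δ := mul_comm _ _
    · have h1' : E τ x j = δ := by simp [hE, hd, hτ]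
      have h2' : E (bflip j τ) x j = 0 := by simp [hE, hd, hfl]
      rw [h1', h2', mul_zero, add_zero]
      calc δ * min (w τ x) (w (bflip j τ) x) ≤ δ * w τ x :=
            mul_le_mul_of_nonneg_left (min_le_left _ _) h0
        _ = w τ x * δ := mul_comm _ _
  -- Step E : testing bound for each pair
  have hEbd : ∀ (j : Fin m) (τ : Fin m → Bool),
      7/16 ≤ ∑ x : Fin n → Fin k, min (w τ x) (w (bflip j τ) x) := by
    intro j τ
    apply myMin_bound hn (P τ) (P (bflip j τ))
      (fun y => qv_nonneg h0 h1 τ _) (fun y => qv_nonneg h0 h1 _ _)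
    · rw [show (∑ y : Fin k, P τ y) = ∑ y : Fin k, qv m a δ τ (y:ℕ) from rfl,
        qv_sum h2m, hsum]
    · rw [show (∑ y : Fin k, P (bflip j τ) y) = ∑ y : Fin k, qv m a δ (bflip j τ) (y:ℕ) from rfl,
        qv_sum h2m, hsum]
    · rw [show (∑ y : Fin k, Real.sqrt (P τ y * P (bflip j τ) y))
          = ∑ y : Fin k, Real.sqrt (qv m a δ τ (y:ℕ) * qv m a δ (bflip j τ) (y:ℕ)) from rfl,
        qv_affinity h2m h0 h1]
      exact hρ
  -- cardinality of the pairing sets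
  have hcard : ∀ j : Fin m,
      2 * ((univ.filter (fun τ : Fin m → Bool => τ j = false)).card) = 2^m := by
    intro j
    have h1' := Finset.card_filter_add_card_filter_not
      (s := (univ : Finset (Fin m → Bool))) (p := fun τ => τ j = false)
    have h2' : (univ.filter (fun τ : Fin m → Bool => ¬ (τ j = false))).card
        = (univ.filter (fun τ : Fin m → Bool => τ j = false)).card := by
      apply Finset.card_bij' (fun τ _ => bflip j τ) (fun τ _ => bflip j τ)
      · intro τ hτ
        simp only [Finset.mem_filter, Finset.mem_univ, true_and,
          Bool.not_eq_false] at hτ ⊢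
        rw [bflip_apply_self, hτ]; rfl
      · intro τ hτ
        simp only [Finset.mem_filter, Finset.mem_univ, true_and,
          Bool.not_eq_false] at hτ ⊢
        rw [bflip_apply_self, hτ]; simp
      · intro τ _; exact bflip_bflip j τ
      · intro τ _; exact bflip_bflip j τ
    have h3' : (univ : Finset (Fin m → Bool)).card = 2^m := by
      simp [Fintype.card_fun]
    calc 2 * ((univ.filter (fun τ : Fin m → Bool => τ j = false)).card)
        = (univ.filter (fun τ : Fin m → Bool => τ j = false)).card
          + (univ.filter (fun τ : Fin m → Bool => ¬ (τ j = false))).card := by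
          rw [h2']; ring
      _ = 2^m := by rw [h1', h3']
  -- assemble
  have main : ∑ j : Fin m, ∑ x : Fin n → Fin k, ∑ τ : Fin m → Bool, w τ x * E τ x j
      ≤ ∑ τ : Fin m → Bool, ∑ x : Fin n → Fin k, w τ x * ∑ j : Fin m, E τ x j := by
    apply le_of_eq
    calc ∑ j : Fin m, ∑ x : Fin n → Fin k, ∑ τ : Fin m → Bool, w τ x * E τ x j
        = ∑ j : Fin m, ∑ τ : Fin m → Bool, ∑ x : Fin n → Fin k, w τ x * E τ x j :=
          by exact Finset.sum_congr rfl fun j _ => Finset.sum_comm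
      _ = ∑ τ : Fin m → Bool, ∑ j : Fin m, ∑ x : Fin n → Fin k, w τ x * E τ x j :=
          Finset.sum_comm
      _ = ∑ τ : Fin m → Bool, ∑ x : Fin n → Fin k, ∑ j : Fin m, w τ x * E τ x j :=
          by exact Finset.sum_congr rfl fun τ _ => Finset.sum_comm
      _ = ∑ τ : Fin m → Bool, ∑ x : Fin n → Fin k, w τ x * ∑ j : Fin m, E τ x j :=
          Finset.sum_congr rfl fun τ _ => Finset.sum_congr rfl fun x _ =>
            (Finset.mul_sum _ _ _).symm
  have step2 : ∀ j : Fin m,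
      ((univ.filter (fun τ : Fin m → Bool => τ j = false)).card : ℝ) * (δ * (7/16))
      ≤ ∑ x : Fin n → Fin k, ∑ τ : Fin m → Bool, w τ x * E τ x j := by
    intro j
    calc ((univ.filter (fun τ : Fin m → Bool => τ j = false)).card : ℝ) * (δ * (7/16))
        = ∑ τ ∈ univ.filter (fun τ : Fin m → Bool => τ j = false), δ * (7/16) := by
          rw [Finset.sum_const, nsmul_eq_mul]
      _ ≤ ∑ τ ∈ univ.filter (fun τ : Fin m → Bool => τ j = false),
            δ * ∑ x : Fin n → Fin k, min (w τ x) (w (bflip j τ) x) :=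
          Finset.sum_le_sum fun τ _ => mul_le_mul_of_nonneg_left (hEbd j τ) h0
      _ = ∑ x : Fin n → Fin k, ∑ τ ∈ univ.filter (fun τ : Fin m → Bool => τ j = false),
            δ * min (w τ x) (w (bflip j τ) x) := by
          rw [Finset.sum_comm]
          apply Finset.sum_congr rfl
          intro τ _
          rw [Finset.mul_sum]
      _ ≤ ∑ x : Fin n → Fin k, ∑ τ : Fin m → Bool, w τ x * E τ x j :=
          Finset.sum_le_sum fun x _ => hD2 j x
  have final : (m:ℝ) * (((2:ℝ)^m / 2) * (δ * (7/16)))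
      ≤ ∑ τ : Fin m → Bool, ∑ x : Fin n → Fin k, w τ x * ∑ j : Fin m, E τ x j := by
    refine le_trans ?_ main
    calc (m:ℝ) * (((2:ℝ)^m / 2) * (δ * (7/16)))
        = ∑ j : Fin m, ((2:ℝ)^m / 2) * (δ * (7/16)) := by
          rw [Finset.sum_const, Finset.card_univ, Fintype.card_fin, nsmul_eq_mul]
      _ ≤ ∑ j : Fin m, ∑ x : Fin n → Fin k, ∑ τ : Fin m → Bool, w τ x * E τ x j := by
          apply Finset.sum_le_sum
          intro j _
          have hc : ((univ.filter (fun τ : Fin m → Bool => τ j = false)).card : ℝ)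
              = (2:ℝ)^m / 2 := by
            have h := hcard j
            have h2 : (2:ℝ) * ((univ.filter (fun τ : Fin m → Bool => τ j = false)).card : ℝ)
                = (2:ℝ)^m := by exact_mod_cast h
            linarith
          rw [← hc]
          exact step2 j
  refine le_trans ?_ (le_trans final ?_)
  · apply le_of_eq; ring
  · apply Finset.sum_le_sum
    intro τ _
    apply Finset.sum_le_sum
    intro x _
    exact mul_le_mul_of_nonneg_left (hA τ x) (hw0 τ x)


lemma categorical_singleton {k : ℕ} (p : Fin k → ℝ) (y : Fin k) :
    categorical p {y} = ENNReal.ofReal (p y) := by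
  rw [categorical, Measure.finset_sum_apply]
  rw [Finset.sum_congr rfl (fun i _ => ?_), Finset.sum_ite_eq' Finset.univ y
    (fun i => ENNReal.ofReal (p i)), if_pos (Finset.mem_univ y)]
  rw [Measure.smul_apply, Measure.dirac_apply]
  by_cases h : i = y
  · subst h; simp
  · simp [Set.indicator, h]

instance categorical_isFinite {k : ℕ} (p : Fin k → ℝ) : IsFiniteMeasure (categorical p) := by
  constructor
  rw [categorical, Measure.finset_sum_apply]
  refine ENNReal.sum_lt_top.2 fun i _ => ?_
  rw [Measure.smul_apply, smul_eq_mul]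
  exact ENNReal.mul_lt_top ENNReal.ofReal_lt_top (by simp [Measure.dirac_apply])

lemma pi_categorical_singleton {k n : ℕ} (p : Fin k → ℝ) (x : Fin n → Fin k) :
    MeasureTheory.Measure.pi (fun _ : Fin n => categorical p) {x}
      = ∏ i, ENNReal.ofReal (p (x i)) := by
  rw [← Set.univ_pi_singleton x, Measure.pi_pi]
  exact Finset.prod_congr rfl fun i _ => categorical_singleton p (x i)

lemma lintegral_pi_categorical {k n : ℕ} (p : Fin k → ℝ)
    (f : (Fin n → Fin k) → ENNReal) :
    ∫⁻ x, f x ∂(MeasureTheory.Measure.pi fun _ : Fin n => categorical p)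
      = ∑ x : Fin n → Fin k, f x * ∏ i, ENNReal.ofReal (p (x i)) := by
  rw [lintegral_fintype]
  exact Finset.sum_congr rfl fun x _ => by rw [pi_categorical_singleton]

end Aux

lemma myNumeric {L S v u : ℝ} (hlog0 : 0 ≤ L) (hlog1 : L ≤ 1)
    (hu0 : 0 ≤ u) (hvS : v ≤ S * u) (hS0 : 0 ≤ S) (hS : S ≤ 12) :
    3 * L / 4096 * v ≤ 7/32 * u := by
  have hkey : S * L ≤ 12 := by nlinarith
  have h2 : L * v ≤ 12 * u := by
    nlinarith [mul_le_mul_of_nonneg_right hkey hu0, mul_le_mul_of_nonneg_left hvS hlog0]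
  nlinarith

/-- Lemma 7: minimax lower bound for estimating a multinomial mean vector in `ℓ¹` loss. -/
theorem stmt_9 (k n : ℕ) (hk : 1 ≤ k) (hn : 1 ≤ n) (hkn : k ≤ 32 * n)
    (est : (Fin n → Fin k) → (Fin k → ℝ)) (hest : ∀ x, est x ∈ probSimplex k) :
    ENNReal.ofReal (3 * Real.log 2 / 4096 * Real.sqrt (((k : ℝ) - 1) / n))
      ≤ ⨆ (p : Fin k → ℝ) (_ : p ∈ probSimplex k),
          ∫⁻ x, ENNReal.ofReal (∑ i, |p i - est x i|)
            ∂(MeasureTheory.Measure.pi fun _ : Fin n => categorical p) := by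
  classical
  rcases Nat.lt_or_ge k 2 with hk2 | hk2
  · -- k = 1 : the bound is zero
    have hk1 : k = 1 := by omega
    subst hk1
    rw [show (((1:ℕ):ℝ) - 1) / (n:ℝ) = 0 by norm_num, Real.sqrt_zero, mul_zero,
      ENNReal.ofReal_zero]
    exact zero_le
  · set m := k / 2 with hmdef
    have hm1 : 1 ≤ m := by omega
    have h2m : 2*m ≤ k := by omega
    have hk2m : k ≤ 2*m + 1 := by omega
    have hmR : (1:ℝ) ≤ (m:ℝ) := by exact_mod_cast hm1
    have hnR : (1:ℝ) ≤ (n:ℝ) := by exact_mod_cast hn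
    have h2mn : (2*(m:ℝ)) ≤ 32*(n:ℝ) := by
      have : (2*m : ℕ) ≤ 32*n := le_trans h2m hkn
      exact_mod_cast this
    set a : ℝ := 1/(2*(m:ℝ)) with hadef
    have ha0 : 0 < a := by positivity
    set t : ℝ := 1/(32*(n:ℝ)) with htdef
    have ht0 : 0 < t := by positivity
    have hta : t ≤ a := by
      rw [hadef, htdef]
      apply one_div_le_one_div_of_le (by positivity) h2mn
    set δ : ℝ := Real.sqrt (a*t) with hδdef
    have hδ0 : 0 ≤ δ := Real.sqrt_nonneg _
    have hδ2 : δ^2 = a*t := Real.sq_sqrt (by positivity)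
    have hδa : δ ≤ a := by
      calc δ = Real.sqrt (a*t) := hδdef
        _ ≤ Real.sqrt (a*a) := Real.sqrt_le_sqrt (by nlinarith)
        _ = a := by rw [show a*a = a^2 by ring, Real.sqrt_sq ha0.le]
    have hsum : (m:ℝ)*(2*a) = 1 := by
      rw [hadef]; field_simp
    have hρ : 1 - 1/(16*(n:ℝ)) ≤ (m:ℝ) * (2*a) - 2*a + 2*Real.sqrt (a^2 - δ^2) := by
      have hat0 : 0 ≤ a - t := by linarith
      have hsq : (a - t)^2 ≤ a^2 - δ^2 := by rw [hδ2]; nlinarith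
      have hle : a - t ≤ Real.sqrt (a^2 - δ^2) := by
        calc a - t = Real.sqrt ((a-t)^2) := (Real.sqrt_sq hat0).symm
          _ ≤ _ := Real.sqrt_le_sqrt hsq
      have he : 1/(16*(n:ℝ)) = 2*t := by rw [htdef]; field_simp; ring
      rw [hsum, he]
      linarith
    -- the real-valued minimax bound
    have Hmain := real_main h2m hn hδ0 hδa hsum hρ est
    -- numeric comparison
    have hC : 3 * Real.log 2 / 4096 * Real.sqrt (((k : ℝ) - 1) / n)
        ≤ 7/32 * (δ * (m:ℝ)) := by
      have hδm2 : (δ*(m:ℝ))^2 = (m:ℝ)/(64*(n:ℝ)) := by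
        rw [mul_pow, hδ2, hadef, htdef]
        field_simp
        ring
      have hδm : δ*(m:ℝ) = Real.sqrt ((m:ℝ)/(64*(n:ℝ))) := by
        rw [← hδm2, Real.sqrt_sq (by positivity)]
      set u : ℝ := Real.sqrt ((m:ℝ)/(64*(n:ℝ))) with hu
      have hu0 : 0 ≤ u := Real.sqrt_nonneg _
      have hk1R : ((k:ℝ) - 1) ≤ 2*(m:ℝ) := by
        have : (k:ℝ) ≤ 2*(m:ℝ) + 1 := by exact_mod_cast hk2m
        linarith
      have step1 : Real.sqrt (((k : ℝ) - 1) / n) ≤ Real.sqrt ((2*(m:ℝ))/n) :=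
        Real.sqrt_le_sqrt (by gcongr)
      have step2 : Real.sqrt ((2*(m:ℝ))/n) = Real.sqrt 128 * u := by
        rw [hu, ← Real.sqrt_mul (by norm_num)]
        congr 1
        field_simp
        ring
      have h128 : Real.sqrt 128 ≤ 12 := by
        calc Real.sqrt 128 ≤ Real.sqrt 144 := Real.sqrt_le_sqrt (by norm_num)
          _ = 12 := by rw [show (144:ℝ) = 12^2 by norm_num, Real.sqrt_sq (by norm_num)]
      have hlog1 : Real.log 2 ≤ 1 := by
        have := Real.log_le_sub_one_of_pos (by norm_num : (0:ℝ) < 2)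
        linarith
      have hlog0 : 0 ≤ Real.log 2 := Real.log_nonneg (by norm_num)
      rw [hδm]
      exact myNumeric hlog0 hlog1 hu0 (step1.trans (le_of_eq step2))
        (Real.sqrt_nonneg _) h128
    -- select a good τ
    have hcard2 : ((Finset.univ : Finset (Fin m → Bool)).card : ℝ) = (2:ℝ)^m := by
      rw [Finset.card_univ]
      simp [Fintype.card_fun]
    have hsumC : ∑ _τ : Fin m → Bool, (3 * Real.log 2 / 4096 * Real.sqrt (((k : ℝ) - 1) / n))
        ≤ ∑ τ : Fin m → Bool, ∑ x : Fin n → Fin k,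
          (∏ i, qv m a δ τ ((x i):ℕ)) * ∑ i : Fin k, |qv m a δ τ (i:ℕ) - est x i| := by
      refine le_trans ?_ Hmain
      rw [Finset.sum_const, nsmul_eq_mul, hcard2]
      have h2pow : (0:ℝ) ≤ (2:ℝ)^m := by positivity
      nlinarith
    obtain ⟨τ, _, hτ⟩ := Finset.exists_le_of_sum_le (Finset.univ_nonempty) hsumC
    -- the hard distribution
    set pτ : Fin k → ℝ := fun i => qv m a δ τ (i:ℕ) with hpτ
    have hmem : pτ ∈ probSimplex k := by
      constructor
      · exact fun i => qv_nonneg hδ0 hδa τ _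
      · rw [show (∑ i, pτ i) = ∑ i : Fin k, qv m a δ τ (i:ℕ) from rfl, qv_sum h2m, hsum]
    refine le_trans ?_ (le_iSup₂_of_le pτ hmem (le_refl _))
    -- compute the integral
    rw [lintegral_pi_categorical pτ]
    have hL0 : ∀ x : Fin n → Fin k, 0 ≤ ∑ i, |pτ i - est x i| :=
      fun x => Finset.sum_nonneg fun i _ => abs_nonneg _
    have hw0 : ∀ x : Fin n → Fin k, 0 ≤ ∏ i, pτ (x i) :=
      fun x => Finset.prod_nonneg fun i _ => qv_nonneg hδ0 hδa τ _
    have heq : ∑ x : Fin n → Fin k,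
        ENNReal.ofReal (∑ i, |pτ i - est x i|) * ∏ i, ENNReal.ofReal (pτ (x i))
        = ENNReal.ofReal (∑ x : Fin n → Fin k,
            (∏ i, qv m a δ τ ((x i):ℕ)) * ∑ i : Fin k, |qv m a δ τ (i:ℕ) - est x i|) := by
      rw [ENNReal.ofReal_sum_of_nonneg
        (fun x _ => mul_nonneg (hw0 x) (hL0 x))]
      apply Finset.sum_congr rfl
      intro x _
      rw [← ENNReal.ofReal_prod_of_nonneg (fun i _ => qv_nonneg hδ0 hδa τ _),
        ← ENNReal.ofReal_mul (hL0 x), mul_comm]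
    rw [heq]
    exact ENNReal.ofReal_le_ofReal hτ
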